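/- arXiv:math/0610496 — 2 statements merged into one kernel-verified Lean document; each statement's English description precedes it below -/
import Mathlib

section
/- For any four distinct points a, b, c, d on the unit circle in counterclockwise order, if α = L([a,b]×[c,d]) and β = L([b,c]×[d,a]) denote the Liouville measures of the two complementary boxes, then e^{-α} + e^{-β} = 1. -/
open Complex

lemma exp_mul_I_sub (x y : ℂ) :
    Complex.exp (x * I) - Complex.exp (y * I)
      = 2 * I * Complex.sin ((x - y) / 2) * Complex.exp ((x + y) / 2 * I) := by
  have h1 : x * I = (x - y) / 2 * I + (x + y) / 2 * I := by ring
  have h2 : y * I = -((x - y) / 2) * I + (x + y) / 2 * I := by ring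
  rw [h1, h2, Complex.exp_add, Complex.exp_add, Complex.sin]
  ring_nf
  rw [Complex.I_sq]
  ring

lemma diff_eq (x y : ℝ) :
    Complex.exp ((x:ℂ) * I) - Complex.exp ((y:ℂ) * I)
      = 2 * I * ((Real.sin ((x - y) / 2) : ℝ) : ℂ)
        * Complex.exp ((((x + y) / 2 : ℝ) : ℂ) * I) := by
  rw [exp_mul_I_sub, Complex.ofReal_sin]
  push_cast
  ring_nf

lemma abs_diff' (x y : ℝ) :
    ‖Complex.exp ((x:ℂ) * I) - Complex.exp ((y:ℂ) * I)‖
      = 2 * |Real.sin ((x - y) / 2)| := by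
  rw [diff_eq]
  simp only [norm_mul, Complex.norm_I, Complex.norm_real, Real.norm_eq_abs, Complex.norm_exp_ofReal_mul_I,
    Complex.norm_two]
  ring

lemma sin_id (p q r s : ℝ) :
    Real.sin (p - s) * Real.sin (q - r) + Real.sin (p - q) * Real.sin (r - s)
      = Real.sin (p - r) * Real.sin (q - s) := by
  simp only [Real.sin_sub]
  ring

lemma sin_half_neg {x y : ℝ} (h1 : x < y) (h2 : y < x + 2 * Real.pi) :
    Real.sin ((x - y) / 2) < 0 := by
  have hp : Real.sin ((y - x) / 2) > 0 :=
    Real.sin_pos_of_pos_of_lt_pi (by linarith) (by linarith)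
  rw [show (x - y) / 2 = -((y - x) / 2) by ring, Real.sin_neg]
  linarith

lemma key_exp (x y z w : ℝ) (hx : 0 < x) (hy : 0 < y) (hz : 0 < z) (hw : 0 < w) :
    Real.exp (-(Real.log (2 * x * (2 * y) / (2 * z * (2 * w))))) = z * w / (x * y) := by
  rw [Real.exp_neg, Real.exp_log (by positivity), inv_div, div_eq_div_iff (by positivity) (by positivity)]
  ring

/-- Four points on the unit circle in counterclockwise order. -/
def CCW4 (a b c d : ℂ) : Prop :=
  ∃ α β γ δ : ℝ, a = Complex.exp (α * Complex.I) ∧ b = Complex.exp (β * Complex.I) ∧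
    c = Complex.exp (γ * Complex.I) ∧ d = Complex.exp (δ * Complex.I) ∧
    α < β ∧ β < γ ∧ γ < δ ∧ δ < α + 2 * Real.pi

/-- The Liouville measure of the box of geodesics `(a,b) × (c,d)`:
`L((a,b)×(c,d)) = log |((a-c)(b-d)) / ((a-d)(b-c))|`. -/
noncomputable def LBox (a b c d : ℂ) : ℝ :=
  Real.log ‖((a - c) * (b - d)) / ((a - d) * (b - c))‖

/-- **The cross-ratio identity for the Liouville measure.**
For distinct points `a, b, c, d` on the unit circle in counterclockwise order, if
`α = L([a,b]×[c,d])` and `β = L([b,c]×[d,a])` are the Liouville measures of the two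
complementary boxes, then `e^{-α} + e^{-β} = 1`. -/
theorem liouville_complementary_boxes (a b c d : ℂ) (h : CCW4 a b c d) :
    Real.exp (-(LBox a b c d)) + Real.exp (-(LBox b c d a)) = 1 := by
  obtain ⟨α, β, γ, δ, ha, hb, hc, hd, h1, h2, h3, h4⟩ := h
  have pi := Real.pi_pos
  have nab : Real.sin ((α - β) / 2) < 0 := sin_half_neg h1 (by linarith)
  have nac : Real.sin ((α - γ) / 2) < 0 := sin_half_neg (by linarith) (by linarith)
  have nad : Real.sin ((α - δ) / 2) < 0 := sin_half_neg (by linarith) (by linarith)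
  have nbc : Real.sin ((β - γ) / 2) < 0 := sin_half_neg h2 (by linarith)
  have nbd : Real.sin ((β - δ) / 2) < 0 := sin_half_neg (by linarith) (by linarith)
  have ncd : Real.sin ((γ - δ) / 2) < 0 := sin_half_neg h3 (by linarith)
  have Aac : ‖a - c‖ = 2 * |Real.sin ((α - γ) / 2)| := by
    rw [ha, hc]; exact abs_diff' α γ
  have Abd : ‖b - d‖ = 2 * |Real.sin ((β - δ) / 2)| := by
    rw [hb, hd]; exact abs_diff' β δ
  have Aad : ‖a - d‖ = 2 * |Real.sin ((α - δ) / 2)| := by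
    rw [ha, hd]; exact abs_diff' α δ
  have Abc : ‖b - c‖ = 2 * |Real.sin ((β - γ) / 2)| := by
    rw [hb, hc]; exact abs_diff' β γ
  have Acd : ‖c - d‖ = 2 * |Real.sin ((γ - δ) / 2)| := by
    rw [hc, hd]; exact abs_diff' γ δ
  have Aba : ‖b - a‖ = 2 * |Real.sin ((α - β) / 2)| := by
    rw [hb, ha, abs_diff', show (β - α) / 2 = -((α - β) / 2) by ring, Real.sin_neg, abs_neg]
  have Aca : ‖c - a‖ = 2 * |Real.sin ((α - γ) / 2)| := by
    rw [hc, ha, abs_diff', show (γ - α) / 2 = -((α - γ) / 2) by ring, Real.sin_neg, abs_neg]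
  have hL1 : Real.exp (-(LBox a b c d))
      = |Real.sin ((α - δ) / 2)| * |Real.sin ((β - γ) / 2)|
        / (|Real.sin ((α - γ) / 2)| * |Real.sin ((β - δ) / 2)|) := by
    unfold LBox
    rw [norm_div, norm_mul, norm_mul, Aac, Abd, Aad, Abc]
    exact key_exp _ _ _ _ (abs_pos.mpr nac.ne) (abs_pos.mpr nbd.ne)
      (abs_pos.mpr nad.ne) (abs_pos.mpr nbc.ne)
  have hL2 : Real.exp (-(LBox b c d a))
      = |Real.sin ((α - β) / 2)| * |Real.sin ((γ - δ) / 2)|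
        / (|Real.sin ((β - δ) / 2)| * |Real.sin ((α - γ) / 2)|) := by
    unfold LBox
    rw [norm_div, norm_mul, norm_mul, Abd, Aca, Aba, Acd]
    exact key_exp _ _ _ _ (abs_pos.mpr nbd.ne) (abs_pos.mpr nac.ne)
      (abs_pos.mpr nab.ne) (abs_pos.mpr ncd.ne)
  have hid : Real.sin ((α - δ) / 2) * Real.sin ((β - γ) / 2)
      + Real.sin ((α - β) / 2) * Real.sin ((γ - δ) / 2)
      = Real.sin ((α - γ) / 2) * Real.sin ((β - δ) / 2) := by
    have := sin_id (α / 2) (β / 2) (γ / 2) (δ / 2)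
    rw [show α / 2 - δ / 2 = (α - δ) / 2 by ring, show β / 2 - γ / 2 = (β - γ) / 2 by ring,
      show α / 2 - β / 2 = (α - β) / 2 by ring, show γ / 2 - δ / 2 = (γ - δ) / 2 by ring,
      show α / 2 - γ / 2 = (α - γ) / 2 by ring, show β / 2 - δ / 2 = (β - δ) / 2 by ring] at this
    exact this
  rw [hL1, hL2, abs_of_neg nad, abs_of_neg nbc, abs_of_neg nac, abs_of_neg nbd,
    abs_of_neg nab, abs_of_neg ncd]
  have d1 : -Real.sin ((α - γ) / 2) * -Real.sin ((β - δ) / 2) ≠ 0 :=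
    ne_of_gt (mul_pos (neg_pos.mpr nac) (neg_pos.mpr nbd))
  have d2 : -Real.sin ((β - δ) / 2) * -Real.sin ((α - γ) / 2) ≠ 0 :=
    ne_of_gt (mul_pos (neg_pos.mpr nbd) (neg_pos.mpr nac))
  rw [div_add_div _ _ d1 d2, div_eq_one_iff_eq (mul_ne_zero d1 d2)]
  linear_combination (Real.sin ((α - γ) / 2) * Real.sin ((β - δ) / 2)) * hid
end

section
/- If a homeomorphism h of the unit circle satisfies e^{-h_*L([a,b]×[c,d])} + e^{-h_*L([b,c]×[d,a])} = 1 for all quadruples a,b,c,d in counterclockwise order, fixes the three points 1, i, -1, and preserves the Liouville measure of every box (i.e. L(h(Q)) = L(Q) for all boxes Q), then h is the identity. -/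
open Complex

lemma cross_sq {p q r s p' q' r' s' : ℂ} (hp : p ≠ 0) (hq : q ≠ 0) (hr : r ≠ 0) (hs : s ≠ 0)
    (hp' : p' ≠ 0) (hq' : q' ≠ 0) (hr' : r' ≠ 0) (hs' : s' ≠ 0)
    (h : Real.log ‖p * q / (r * s)‖ = Real.log ‖p' * q' / (r' * s')‖) :
    Complex.normSq p * Complex.normSq q * (Complex.normSq r' * Complex.normSq s') =
      Complex.normSq p' * Complex.normSq q' * (Complex.normSq r * Complex.normSq s) := by
  have e1 : 0 < ‖p * q / (r * s)‖ :=
    norm_pos_iff.mpr (div_ne_zero (mul_ne_zero hp hq) (mul_ne_zero hr hs))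
  have e2 : 0 < ‖p' * q' / (r' * s')‖ :=
    norm_pos_iff.mpr (div_ne_zero (mul_ne_zero hp' hq') (mul_ne_zero hr' hs'))
  have h1 : ‖p * q / (r * s)‖ = ‖p' * q' / (r' * s')‖ :=
    Real.log_injOn_pos (Set.mem_Ioi.mpr e1) (Set.mem_Ioi.mpr e2) h
  simp only [norm_div, norm_mul] at h1
  rw [div_eq_div_iff (ne_of_gt (mul_pos (norm_pos_iff.mpr hr) (norm_pos_iff.mpr hs)))
    (ne_of_gt (mul_pos (norm_pos_iff.mpr hr') (norm_pos_iff.mpr hs')))] at h1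
  have h3 : ((‖p‖ * ‖q‖) * (‖r'‖ * ‖s'‖))^2 =
      ((‖p'‖ * ‖q'‖) * (‖r‖ * ‖s‖))^2 := by rw [h1]
  simp only [← Complex.sq_norm]
  linear_combination h3

lemma exp_pi_div_two_mul_I' : Complex.exp ((↑(Real.pi/2 : ℝ)) * I) = I := by
  rw [Complex.exp_mul_I, ← Complex.ofReal_cos, ← Complex.ofReal_sin,
    Real.cos_pi_div_two, Real.sin_pi_div_two]
  simp

lemma exp_two_pi_mul_I' : Complex.exp ((↑(2 * Real.pi : ℝ)) * I) = 1 := by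
  push_cast
  exact Complex.exp_two_pi_mul_I

-- normSq expansion lemmas for points on the unit circle
lemma ns_a {w : ℂ} (h : w.re * w.re + w.im * w.im = 1) :
    Complex.normSq (w - -1) = 2 + 2 * w.re := by
  simp only [Complex.normSq_apply, Complex.sub_re, Complex.sub_im, Complex.neg_re,
    Complex.neg_im, Complex.one_re, Complex.one_im]
  ring_nf
  linarith

lemma ns_b {w : ℂ} (h : w.re * w.re + w.im * w.im = 1) :
    Complex.normSq (w - 1) = 2 - 2 * w.re := by
  simp only [Complex.normSq_apply, Complex.sub_re, Complex.sub_im, Complex.one_re, Complex.one_im]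
  ring_nf
  linarith

lemma ns_c {w : ℂ} (h : w.re * w.re + w.im * w.im = 1) :
    Complex.normSq (1 - w) = 2 - 2 * w.re := by
  simp only [Complex.normSq_apply, Complex.sub_re, Complex.sub_im, Complex.one_re, Complex.one_im]
  ring_nf
  linarith

lemma ns_d {w : ℂ} (h : w.re * w.re + w.im * w.im = 1) :
    Complex.normSq (w - I) = 2 - 2 * w.im := by
  simp only [Complex.normSq_apply, Complex.sub_re, Complex.sub_im, Complex.I_re, Complex.I_im]
  ring_nf
  linarith

lemma ns_e {w : ℂ} (h : w.re * w.re + w.im * w.im = 1) :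
    Complex.normSq (I - w) = 2 - 2 * w.im := by
  simp only [Complex.normSq_apply, Complex.sub_re, Complex.sub_im, Complex.I_re, Complex.I_im]
  ring_nf
  linarith

lemma ns_f {w : ℂ} (h : w.re * w.re + w.im * w.im = 1) :
    Complex.normSq (-1 - w) = 2 + 2 * w.re := by
  simp only [Complex.normSq_apply, Complex.sub_re, Complex.sub_im, Complex.neg_re,
    Complex.neg_im, Complex.one_re, Complex.one_im]
  ring_nf
  linarith

lemma ns_k1 : Complex.normSq (1 - I) = 2 := by simp [Complex.normSq_apply]; norm_num
lemma ns_k2 : Complex.normSq ((1 : ℂ) - -1) = 4 := by norm_num [Complex.normSq_apply]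
lemma ns_k3 : Complex.normSq (I - 1) = 2 := by simp [Complex.normSq_apply]; norm_num
lemma ns_k4 : Complex.normSq (I - -1) = 2 := by simp [Complex.normSq_apply]; norm_num
lemma ns_k5 : Complex.normSq ((-1 : ℂ) - 1) = 4 := by norm_num [Complex.normSq_apply]

/-- **A circle homeomorphism preserving the Liouville measure and fixing three points
is the identity.**  If a homeomorphism `h` of the unit circle satisfies the normalization
`e^{-h_*L([a,b]×[c,d])} + e^{-h_*L([b,c]×[d,a])} = 1` for all quadruples `a,b,c,d` in
counterclockwise order, fixes the three points `1, i, -1`, and preserves the Liouville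
measure of every box (`L(h(Q)) = L(Q)` for all boxes `Q`), then `h` is the identity on
the circle. -/
theorem liouville_preserving_homeo_is_id (h : ℂ → ℂ)
    (hbij : Set.BijOn h (Metric.sphere 0 1) (Metric.sphere 0 1))
    (hcont : ContinuousOn h (Metric.sphere 0 1))
    (hnormalize : ∀ a b c d : ℂ, CCW4 a b c d →
      Real.exp (-(LBox (h a) (h b) (h c) (h d))) +
        Real.exp (-(LBox (h b) (h c) (h d) (h a))) = 1)
    (hfix : h 1 = 1 ∧ h Complex.I = Complex.I ∧ h (-1) = -1)
    (hpres : ∀ a b c d : ℂ, CCW4 a b c d →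
      LBox (h a) (h b) (h c) (h d) = LBox a b c d) :
    ∀ x : ℂ, ‖x‖ = 1 → h x = x := by
  obtain ⟨hf1, hfI, hfm1⟩ := hfix
  intro x hx
  have pi_pos := Real.pi_pos
  obtain ⟨θ, hθ1, hθ2, hx0⟩ : ∃ θ : ℝ, -Real.pi < θ ∧ θ ≤ Real.pi ∧
      x = Complex.exp ((θ : ℂ) * I) := by
    refine ⟨x.arg, Complex.neg_pi_lt_arg x, Complex.arg_le_pi x, ?_⟩
    conv_lhs => rw [← Complex.norm_mul_exp_arg_mul_I x]
    rw [hx, Complex.ofReal_one, one_mul]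
  have hre : x.re = Real.cos θ := by rw [hx0]; exact Complex.exp_ofReal_mul_I_re θ
  have him : x.im = Real.sin θ := by rw [hx0]; exact Complex.exp_ofReal_mul_I_im θ
  have memx : x ∈ Metric.sphere (0:ℂ) 1 := by
    simp [mem_sphere_zero_iff_norm, hx]
  have mem1 : (1:ℂ) ∈ Metric.sphere (0:ℂ) 1 := by
    simp [mem_sphere_zero_iff_norm]
  have memI : Complex.I ∈ Metric.sphere (0:ℂ) 1 := by
    simp [mem_sphere_zero_iff_norm]
  have memm1 : (-1:ℂ) ∈ Metric.sphere (0:ℂ) 1 := by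
    simp [mem_sphere_zero_iff_norm]
  have hzabs : ‖h x‖ = 1 := by
    have := hbij.mapsTo memx
    simpa [mem_sphere_zero_iff_norm] using this
  have px : x.re * x.re + x.im * x.im = 1 := by
    rw [← Complex.normSq_apply, ← Complex.sq_norm, hx]; norm_num
  have pz : (h x).re * (h x).re + (h x).im * (h x).im = 1 := by
    rw [← Complex.normSq_apply, ← Complex.sq_norm, hzabs]; norm_num
  have hne : ∀ y : ℂ, y ∈ Metric.sphere (0:ℂ) 1 → h y = y → x ≠ y → h x ≠ y := by
    intro y hy hfy hxy e
    exact hxy (hbij.injOn memx hy (by rw [e, hfy]))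
  -- constant nonvanishing differences
  have k1 : (1 : ℂ) - I ≠ 0 := sub_ne_zero.mpr (by norm_num [Complex.ext_iff])
  have k2 : (1 : ℂ) - -1 ≠ 0 := by norm_num
  have k3 : I - 1 ≠ 0 := sub_ne_zero.mpr (by norm_num [Complex.ext_iff])
  have k4 : I - -1 ≠ 0 := sub_ne_zero.mpr (by norm_num [Complex.ext_iff])
  have k5 : (-1 : ℂ) - 1 ≠ 0 := by norm_num
  have e0 : (1 : ℂ) = Complex.exp ((0 : ℝ) * I) := by norm_num
  rcases lt_trichotomy θ 0 with hc | hc | hc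
  · -- arc 3 : θ ∈ (-π, 0)
    have t_neg : x.im < 0 := by
      rw [him]; exact Real.sin_neg_of_neg_of_neg_pi_lt hc hθ1
    have xne1 : x ≠ 1 := by intro e; rw [e] at t_neg; norm_num at t_neg
    have xnem1 : x ≠ -1 := by intro e; rw [e] at t_neg; norm_num at t_neg
    have xneI : x ≠ I := by intro e; rw [e] at t_neg; norm_num at t_neg
    have z1 : h x ≠ 1 := hne 1 mem1 hf1 xne1
    have zI : h x ≠ I := hne I memI hfI xneI
    have zm1 : h x ≠ -1 := hne (-1) memm1 hfm1 xnem1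
    have g1 : (1 : ℂ) - h x ≠ 0 := sub_ne_zero.mpr (Ne.symm z1)
    have g2 : I - h x ≠ 0 := sub_ne_zero.mpr (Ne.symm zI)
    have g3 : (-1 : ℂ) - h x ≠ 0 := sub_ne_zero.mpr (Ne.symm zm1)
    have f1 : (1 : ℂ) - x ≠ 0 := sub_ne_zero.mpr (Ne.symm xne1)
    have f2 : I - x ≠ 0 := sub_ne_zero.mpr (Ne.symm xneI)
    have f3 : (-1 : ℂ) - x ≠ 0 := sub_ne_zero.mpr (Ne.symm xnem1)
    have hx0' : x = Complex.exp ((↑(θ + 2 * Real.pi) : ℂ) * I) := by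
      have e : Complex.exp ((↑(θ + 2 * Real.pi) : ℂ) * I) = Complex.exp ((θ : ℂ) * I) := by
        push_cast
        rw [add_mul, Complex.exp_add, Complex.exp_two_pi_mul_I, mul_one]
      rw [hx0, e]
    have ccw1 : CCW4 1 I (-1) x :=
      ⟨0, Real.pi / 2, Real.pi, θ + 2 * Real.pi, e0, exp_pi_div_two_mul_I'.symm,
        Complex.exp_pi_mul_I.symm, hx0', by linarith, by linarith, by linarith, by linarith⟩
    have ccw2 : CCW4 I (-1) x 1 :=
      ⟨Real.pi / 2, Real.pi, θ + 2 * Real.pi, 2 * Real.pi, exp_pi_div_two_mul_I'.symm,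
        Complex.exp_pi_mul_I.symm, hx0', exp_two_pi_mul_I'.symm, by linarith, by linarith,
        by linarith, by linarith⟩
    have E1 := hpres 1 I (-1) x ccw1
    rw [hf1, hfI, hfm1] at E1
    have E2 := hpres I (-1) x 1 ccw2
    rw [hf1, hfI, hfm1] at E2
    unfold LBox at E1 E2
    have K1 := cross_sq k2 g2 g1 k4 k2 f2 f1 k4 E1
    have K2 := cross_sq g2 k5 k3 g3 f2 k5 k3 f3 E2
    simp only [ns_a pz, ns_a px, ns_b pz, ns_b px, ns_c pz, ns_c px, ns_d pz, ns_d px,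
      ns_e pz, ns_e px, ns_f pz, ns_f px, ns_k1, ns_k2, ns_k3, ns_k4, ns_k5] at K1 K2
    have hv : (h x).im = x.im := by linarith [K1, K2]
    rw [hv] at K2
    have step : (2 - 2 * x.im) * (2 + 2 * x.re) = (2 - 2 * x.im) * (2 + 2 * (h x).re) := by
      linarith [K2]
    have hu : (h x).re = x.re := by
      have := mul_left_cancel₀ (ne_of_gt (by linarith : (0:ℝ) < 2 - 2 * x.im)) step
      linarith
    exact Complex.ext hu hv
  · -- θ = 0 : x = 1
    have e : x = 1 := by rw [hx0, hc]; norm_num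
    rw [e, hf1]
  · rcases lt_trichotomy θ (Real.pi / 2) with hc2 | hc2 | hc2
    · -- arc 1 : θ ∈ (0, π/2)
      have t_pos : 0 < x.im := by
        rw [him]; exact Real.sin_pos_of_pos_of_lt_pi hc (by linarith)
      have s_pos : 0 < x.re := by
        rw [hre]; exact Real.cos_pos_of_mem_Ioo ⟨by linarith, hc2⟩
      have xne1 : x ≠ 1 := by intro e; rw [e] at t_pos; norm_num at t_pos
      have xnem1 : x ≠ -1 := by intro e; rw [e] at t_pos; norm_num at t_pos
      have xneI : x ≠ I := by intro e; rw [e] at s_pos; norm_num at s_pos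
      have z1 : h x ≠ 1 := hne 1 mem1 hf1 xne1
      have zI : h x ≠ I := hne I memI hfI xneI
      have zm1 : h x ≠ -1 := hne (-1) memm1 hfm1 xnem1
      have d1 : h x - -1 ≠ 0 := sub_ne_zero.mpr zm1
      have d2 : h x - I ≠ 0 := sub_ne_zero.mpr zI
      have d3 : h x - 1 ≠ 0 := sub_ne_zero.mpr z1
      have e1 : x - -1 ≠ 0 := sub_ne_zero.mpr xnem1
      have e2 : x - I ≠ 0 := sub_ne_zero.mpr xneI
      have e3 : x - 1 ≠ 0 := sub_ne_zero.mpr xne1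
      have ccw1 : CCW4 1 x I (-1) :=
        ⟨0, θ, Real.pi / 2, Real.pi, e0, hx0, exp_pi_div_two_mul_I'.symm,
          Complex.exp_pi_mul_I.symm, hc, hc2, by linarith, by linarith⟩
      have ccw2 : CCW4 x I (-1) 1 :=
        ⟨θ, Real.pi / 2, Real.pi, 2 * Real.pi, hx0, exp_pi_div_two_mul_I'.symm,
          Complex.exp_pi_mul_I.symm, exp_two_pi_mul_I'.symm, hc2, by linarith, by linarith,
          by linarith⟩
      have E1 := hpres 1 x I (-1) ccw1
      rw [hf1, hfI, hfm1] at E1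
      have E2 := hpres x I (-1) 1 ccw2
      rw [hf1, hfI, hfm1] at E2
      unfold LBox at E1 E2
      have K1 := cross_sq k1 d1 k2 d2 k1 e1 k2 e2 E1
      have K2 := cross_sq d1 k3 d3 k4 e1 k3 e3 k4 E2
      simp only [ns_a pz, ns_a px, ns_b pz, ns_b px, ns_c pz, ns_c px, ns_d pz, ns_d px,
        ns_e pz, ns_e px, ns_f pz, ns_f px, ns_k1, ns_k2, ns_k3, ns_k4, ns_k5] at K1 K2
      have hu : (h x).re = x.re := by linarith [K2]
      rw [hu] at K1
      have step : (2 + 2 * x.re) * (2 - 2 * x.im) = (2 + 2 * x.re) * (2 - 2 * (h x).im) := by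
        linarith [K1]
      have hv : (h x).im = x.im := by
        have := mul_left_cancel₀ (ne_of_gt (by linarith : (0:ℝ) < 2 + 2 * x.re)) step
        linarith
      exact Complex.ext hu hv
    · -- θ = π/2 : x = I
      have e : x = I := by rw [hx0, hc2]; exact exp_pi_div_two_mul_I'
      rw [e, hfI]
    · rcases lt_or_eq_of_le hθ2 with hc3 | hc3
      · -- arc 2 : θ ∈ (π/2, π)
        have t_pos : 0 < x.im := by
          rw [him]; exact Real.sin_pos_of_pos_of_lt_pi (by linarith) hc3
        have s_neg : x.re < 0 := by
          rw [hre]; exact Real.cos_neg_of_pi_div_two_lt_of_lt hc2 (by linarith)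
        have xne1 : x ≠ 1 := by intro e; rw [e] at t_pos; norm_num at t_pos
        have xnem1 : x ≠ -1 := by intro e; rw [e] at t_pos; norm_num at t_pos
        have xneI : x ≠ I := by intro e; rw [e] at s_neg; norm_num at s_neg
        have z1 : h x ≠ 1 := hne 1 mem1 hf1 xne1
        have zI : h x ≠ I := hne I memI hfI xneI
        have zm1 : h x ≠ -1 := hne (-1) memm1 hfm1 xnem1
        have d1 : h x - -1 ≠ 0 := sub_ne_zero.mpr zm1
        have d3 : h x - 1 ≠ 0 := sub_ne_zero.mpr z1
        have g1 : (1 : ℂ) - h x ≠ 0 := sub_ne_zero.mpr (Ne.symm z1)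
        have g2 : I - h x ≠ 0 := sub_ne_zero.mpr (Ne.symm zI)
        have e1 : x - -1 ≠ 0 := sub_ne_zero.mpr xnem1
        have e3 : x - 1 ≠ 0 := sub_ne_zero.mpr xne1
        have f1 : (1 : ℂ) - x ≠ 0 := sub_ne_zero.mpr (Ne.symm xne1)
        have f2 : I - x ≠ 0 := sub_ne_zero.mpr (Ne.symm xneI)
        have ccw1 : CCW4 1 I x (-1) :=
          ⟨0, Real.pi / 2, θ, Real.pi, e0, exp_pi_div_two_mul_I'.symm, hx0,
            Complex.exp_pi_mul_I.symm, by linarith, hc2, hc3, by linarith⟩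
        have ccw2 : CCW4 I x (-1) 1 :=
          ⟨Real.pi / 2, θ, Real.pi, 2 * Real.pi, exp_pi_div_two_mul_I'.symm, hx0,
            Complex.exp_pi_mul_I.symm, exp_two_pi_mul_I'.symm, hc2, hc3, by linarith,
            by linarith⟩
        have E1 := hpres 1 I x (-1) ccw1
        rw [hf1, hfI, hfm1] at E1
        have E2 := hpres I x (-1) 1 ccw2
        rw [hf1, hfI, hfm1] at E2
        unfold LBox at E1 E2
        have K1 := cross_sq g1 k4 k2 g2 f1 k4 k2 f2 E1
        have K2 := cross_sq k4 d3 k3 d1 k4 e3 k3 e1 E2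
        simp only [ns_a pz, ns_a px, ns_b pz, ns_b px, ns_c pz, ns_c px, ns_d pz, ns_d px,
          ns_e pz, ns_e px, ns_f pz, ns_f px, ns_k1, ns_k2, ns_k3, ns_k4, ns_k5] at K1 K2
        have hu : (h x).re = x.re := by linarith [K2]
        rw [hu] at K1
        have step : (2 - 2 * x.re) * (2 - 2 * x.im) = (2 - 2 * x.re) * (2 - 2 * (h x).im) := by
          linarith [K1]
        have hv : (h x).im = x.im := by
          have := mul_left_cancel₀ (ne_of_gt (by linarith : (0:ℝ) < 2 - 2 * x.re)) step
          linarith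
        exact Complex.ext hu hv
      · -- θ = π : x = -1
        have e : x = -1 := by rw [hx0, hc3]; exact Complex.exp_pi_mul_I
        rw [e, hfm1]
end
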